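/- The persistence map is equivariant under monotone reparametrization: for any filter f on a finite based chain complex and any non-decreasing map ψ : ℝ → ℝ, the barcode of ψ ∘ f equals ψ applied to the barcode of f, where ψ acts on intervals by (b,d) ↦ (ψ(b), ψ(d)), discarding intervals with ψ(b) = ψ(d), and ψ(∞) = ∞. -/

import Mathlib

noncomputable section
open scoped Classical

/-- The subspace of chains spanned by the basis elements in `s`. -/
def chainSpan (𝕜 : Type*) [Field 𝕜] {E : Type*} [Fintype E] [DecidableEq E]
    (s : Set E) : Submodule 𝕜 (E → 𝕜) :=
  Submodule.span 𝕜 ((fun e => Pi.single e (1 : 𝕜)) '' s)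

/-- Chains supported on the closed sublevel set `{f ≤ t}`. -/
def FLe (𝕜 : Type*) [Field 𝕜] {E : Type*} [Fintype E] [DecidableEq E]
    (f : E → ℝ) (t : ℝ) : Submodule 𝕜 (E → 𝕜) :=
  chainSpan 𝕜 {e | f e ≤ t}

/-- Chains supported on the open sublevel set `{f < t}`. -/
def FLt (𝕜 : Type*) [Field 𝕜] {E : Type*} [Fintype E] [DecidableEq E]
    (f : E → ℝ) (t : ℝ) : Submodule 𝕜 (E → 𝕜) :=
  chainSpan 𝕜 {e | f e < t}

/-- Rank of the persistence map: dimension of the image of the degree-`p` cycles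
supported on `A` in the quotient by the boundaries `bd(B)`. -/
def persRankR {𝕜 : Type*} [Field 𝕜] {E : Type*} [Fintype E] [DecidableEq E]
    (bd : (E → 𝕜) →ₗ[𝕜] (E → 𝕜)) (deg : E → ℕ) (p : ℕ)
    (A B : Submodule 𝕜 (E → 𝕜)) : ℕ :=
  Module.finrank 𝕜
    ((LinearMap.ker bd ⊓ chainSpan 𝕜 {e | deg e = p} ⊓ A).map
      (Submodule.mkQ (Submodule.map bd B)))

/-- Multiplicity of the bounded interval `(b, d)` in the degree-`p` barcode of `f`. -/
def multFinR {𝕜 : Type*} [Field 𝕜] {E : Type*} [Fintype E] [DecidableEq E]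
    (bd : (E → 𝕜) →ₗ[𝕜] (E → 𝕜)) (deg : E → ℕ) (f : E → ℝ) (p : ℕ) (b d : ℝ) : ℤ :=
  (persRankR bd deg p (FLe 𝕜 f b) (FLt 𝕜 f d) : ℤ)
    - persRankR bd deg p (FLt 𝕜 f b) (FLt 𝕜 f d)
    - persRankR bd deg p (FLe 𝕜 f b) (FLe 𝕜 f d)
    + persRankR bd deg p (FLt 𝕜 f b) (FLe 𝕜 f d)

/-- Multiplicity of the infinite interval `(b, ∞)` in the degree-`p` barcode of `f`. -/
def multInfR {𝕜 : Type*} [Field 𝕜] {E : Type*} [Fintype E] [DecidableEq E]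
    (bd : (E → 𝕜) →ₗ[𝕜] (E → 𝕜)) (deg : E → ℕ) (f : E → ℝ) (p : ℕ) (b : ℝ) : ℤ :=
  (persRankR bd deg p (FLe 𝕜 f b) ⊤ : ℤ) - persRankR bd deg p (FLt 𝕜 f b) ⊤

lemma chainSpan_congr (𝕜 : Type*) [Field 𝕜] {E : Type*} [Fintype E] [DecidableEq E]
    {s t : Set E} (h : s = t) : chainSpan 𝕜 s = chainSpan 𝕜 t := by rw [h]

lemma tele {𝕜 : Type} [Field 𝕜] {E : Type} [Fintype E] [DecidableEq E]
    (f : E → ℝ) (ψ : ℝ → ℝ) (hψ : Monotone ψ) (b : ℝ)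
    (h : Submodule 𝕜 (E → 𝕜) → ℤ) :
    ∑ b₀ ∈ Finset.univ.image f,
        (if ψ b₀ = b then h (FLe 𝕜 f b₀) - h (FLt 𝕜 f b₀) else 0)
      = h (FLe 𝕜 (ψ ∘ f) b) - h (FLt 𝕜 (ψ ∘ f) b) := by
  classical
  set V : Finset ℝ := Finset.univ.image f with hV
  set W : Finset ℝ := V.filter (fun x => ψ x = b) with hW
  have hmemW : ∀ x, x ∈ W ↔ ((∃ e, f e = x) ∧ ψ x = b) := by
    intro x
    simp [hW, hV, Finset.mem_filter, Finset.mem_image]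
  rw [← Finset.sum_filter]
  set n := W.card with hn
  set o := W.orderIsoOfFin rfl with ho
  have hoW : ∀ i : Fin n, ((o i : ℝ) ∈ W) := fun i => (o i).2
  have hoψ : ∀ i : Fin n, ψ (o i : ℝ) = b := fun i => ((hmemW _).1 (hoW i)).2
  -- index of a point of W
  have hidx : ∀ x (hx : x ∈ W), ∃ j : Fin n, (o j : ℝ) = x := by
    intro x hx
    obtain ⟨j, hj⟩ := o.surjective ⟨x, hx⟩
    exact ⟨j, by rw [hj]⟩
  -- S4 : top of the block
  have keyS4 : ∀ (i : Fin n), (¬ (i.1 + 1 < n)) →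
      FLe 𝕜 f (o i : ℝ) = FLe 𝕜 (ψ ∘ f) b := by
    intro i hi
    refine chainSpan_congr 𝕜 (Set.ext fun e => ?_)
    simp only [Set.mem_setOf_eq, Function.comp]
    constructor
    · intro hle
      calc ψ (f e) ≤ ψ (o i : ℝ) := hψ hle
        _ = b := hoψ i
    · intro hle
      by_contra hgt
      push_neg at hgt
      have h1 : ψ (f e) = b := le_antisymm hle ((hoψ i) ▸ hψ hgt.le)
      obtain ⟨j, hj⟩ := hidx (f e) ((hmemW _).2 ⟨⟨e, rfl⟩, h1⟩)
      have hij : i < j := o.lt_iff_lt.1 (Subtype.coe_lt_coe.1 (by rw [hj]; exact hgt))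
      have : j.1 < n := j.2
      have : i.1 < j.1 := hij
      omega
  -- S3 : consecutive
  have keyS3 : ∀ (i : Fin n) (hi : i.1 + 1 < n),
      FLe 𝕜 f (o i : ℝ) = FLt 𝕜 f (o ⟨i.1 + 1, hi⟩ : ℝ) := by
    intro i hi
    refine chainSpan_congr 𝕜 (Set.ext fun e => ?_)
    simp only [Set.mem_setOf_eq]
    have hlt : (o i : ℝ) < (o ⟨i.1 + 1, hi⟩ : ℝ) :=
      Subtype.coe_lt_coe.2 (o.lt_iff_lt.2 (by exact Fin.mk_lt_mk.2 (by omega)))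
    constructor
    · intro hle; exact lt_of_le_of_lt hle hlt
    · intro hle
      by_contra hgt
      push_neg at hgt
      -- f e strictly between o i and o (i+1); show f e ∈ W
      have hb1 : ψ (f e) = b := by
        have h1 : ψ (f e) ≥ b := (hoψ i) ▸ hψ hgt.le
        have h2 : ψ (f e) ≤ b := (hoψ ⟨i.1+1, hi⟩) ▸ hψ hle.le
        exact le_antisymm h2 h1
      obtain ⟨j, hj⟩ := hidx (f e) ((hmemW _).2 ⟨⟨e, rfl⟩, hb1⟩)
      have hij : i < j := o.lt_iff_lt.1 (Subtype.coe_lt_coe.1 (by rw [hj]; exact hgt))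
      have hji : j < ⟨i.1+1, hi⟩ := o.lt_iff_lt.1 (Subtype.coe_lt_coe.1 (by rw [hj]; exact hle))
      have h1 : i.1 < j.1 := hij
      have h2 : j.1 < i.1 + 1 := hji
      omega
  -- S2 : bottom of the block
  have keyS2 : ∀ (i : Fin n), i.1 = 0 → FLt 𝕜 f (o i : ℝ) = FLt 𝕜 (ψ ∘ f) b := by
    intro i hi0
    refine chainSpan_congr 𝕜 (Set.ext fun e => ?_)
    simp only [Set.mem_setOf_eq, Function.comp]
    constructor
    · intro hlt
      have h1 : ψ (f e) ≤ b := (hoψ i) ▸ hψ hlt.le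
      rcases lt_or_eq_of_le h1 with h2 | h2
      · exact h2
      · exfalso
        obtain ⟨j, hj⟩ := hidx (f e) ((hmemW _).2 ⟨⟨e, rfl⟩, h2⟩)
        have hji : j < i := o.lt_iff_lt.1 (Subtype.coe_lt_coe.1 (by rw [hj]; exact hlt))
        have : j.1 < i.1 := hji
        omega
    · intro hlt
      by_contra hge
      push_neg at hge
      have : b ≤ ψ (f e) := (hoψ i) ▸ hψ hge
      exact absurd hlt (not_lt.2 this)
  -- S1 : empty block
  have keyS1 : n = 0 → FLe 𝕜 (ψ ∘ f) b = FLt 𝕜 (ψ ∘ f) b := by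
    intro hn0
    refine chainSpan_congr 𝕜 (Set.ext fun e => ?_)
    simp only [Set.mem_setOf_eq, Function.comp]
    constructor
    · intro hle
      rcases lt_or_eq_of_le hle with h2 | h2
      · exact h2
      · exfalso
        have : f e ∈ W := (hmemW _).2 ⟨⟨e, rfl⟩, h2⟩
        have := Finset.card_pos.2 ⟨_, this⟩
        omega
    · exact le_of_lt
  -- the telescoping sequence
  set u : ℕ → Submodule 𝕜 (E → 𝕜) := fun i =>
    if hi : i < n then FLt 𝕜 f (o ⟨i, hi⟩ : ℝ) else FLe 𝕜 (ψ ∘ f) b with hu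
  have husucc : ∀ i : Fin n, u (i.1 + 1) = FLe 𝕜 f (o i : ℝ) := by
    intro i
    by_cases hi : i.1 + 1 < n
    · rw [hu]; simp only [hi, dif_pos]
      exact (keyS3 i hi).symm
    · rw [hu]; simp only [hi, dif_neg, not_false_iff]
      exact (keyS4 i hi).symm
  have hu0 : u 0 = FLt 𝕜 (ψ ∘ f) b := by
    by_cases h0 : 0 < n
    · rw [hu]; simp only [h0, dif_pos]
      exact keyS2 ⟨0, h0⟩ rfl
    · rw [hu]; simp only [h0, dif_neg, not_false_iff]
      exact keyS1 (by omega)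
  have hun : u n = FLe 𝕜 (ψ ∘ f) b := by
    rw [hu]; simp
  -- rewrite the sum
  have hsum : ∑ x ∈ W, (h (FLe 𝕜 f x) - h (FLt 𝕜 f x))
      = ∑ i ∈ Finset.range n, (h (u (i + 1)) - h (u i)) := by
    rw [← Fin.sum_univ_eq_sum_range]
    rw [← Finset.sum_coe_sort W (fun x => h (FLe 𝕜 f x) - h (FLt 𝕜 f x))]
    rw [← o.toEquiv.sum_comp (fun x : W => h (FLe 𝕜 f (x : ℝ)) - h (FLt 𝕜 f (x : ℝ)))]
    refine Finset.sum_congr rfl fun i _ => ?_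
    have h1 : u (i.1 + 1) = FLe 𝕜 f (o i : ℝ) := husucc i
    have h2 : u i.1 = FLt 𝕜 f (o i : ℝ) := by
      rw [hu]; exact dif_pos (show i.1 < n from i.2)
    rw [h1, h2]; rfl
  rw [hsum, Finset.sum_range_sub (fun i => h (u i)), hun, hu0]

/-- Equivariance of the persistence map under monotone reparametrization: the
barcode of `ψ ∘ f` is obtained from the barcode of `f` by applying `ψ` to interval
endpoints, discarding intervals with `ψ b = ψ d`, and fixing `∞`. -/
theorem stmt16 (E : Type) [Fintype E] [DecidableEq E] (𝕜 : Type) [Field 𝕜]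
    (bd : (E → 𝕜) →ₗ[𝕜] (E → 𝕜)) (hbd : bd ∘ₗ bd = 0) (deg : E → ℕ)
    (hdeg : ∀ e e' : E, bd (Pi.single e 1) e' ≠ 0 → deg e' + 1 = deg e)
    (f : E → ℝ) (hfilt : ∀ t : ℝ, Submodule.map bd (FLe 𝕜 f t) ≤ FLe 𝕜 f t)
    (ψ : ℝ → ℝ) (hψ : Monotone ψ) :
    (∀ p : ℕ, ∀ b d : ℝ, b < d →
      multFinR bd deg (ψ ∘ f) p b d =
        ∑ b₀ ∈ Finset.univ.image f, ∑ d₀ ∈ Finset.univ.image f,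
          if ψ b₀ = b ∧ ψ d₀ = d ∧ b₀ < d₀ then multFinR bd deg f p b₀ d₀ else 0) ∧
    (∀ p : ℕ, ∀ b : ℝ,
      multInfR bd deg (ψ ∘ f) p b =
        ∑ b₀ ∈ Finset.univ.image f,
          if ψ b₀ = b then multInfR bd deg f p b₀ else 0) := by
  classical
  constructor
  · intro p b d hbd'
    set R : Submodule 𝕜 (E → 𝕜) → Submodule 𝕜 (E → 𝕜) → ℤ :=
      fun A B => (persRankR bd deg p A B : ℤ) with hR
    have hcond : ∀ b₀ d₀ : ℝ, ψ b₀ = b → ψ d₀ = d → b₀ < d₀ := by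
      intro b₀ d₀ h1 h2
      by_contra hle
      push_neg at hle
      have := hψ hle
      rw [h1, h2] at this
      exact absurd hbd' (not_lt.2 this)
    have step1 : ∀ b₀ d₀ : ℝ,
        (if ψ b₀ = b ∧ ψ d₀ = d ∧ b₀ < d₀ then multFinR bd deg f p b₀ d₀ else 0)
          = (if ψ b₀ = b then (if ψ d₀ = d then multFinR bd deg f p b₀ d₀ else 0) else 0) := by
      intro b₀ d₀
      by_cases h1 : ψ b₀ = b <;> by_cases h2 : ψ d₀ = d
      · simp [h1, h2, hcond b₀ d₀ h1 h2]
      · simp [h1, h2]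
      · simp [h1, h2]
      · simp [h1, h2]
    have hinner : ∀ A : Submodule 𝕜 (E → 𝕜),
        ∑ d₀ ∈ Finset.univ.image f,
            (if ψ d₀ = d then R A (FLt 𝕜 f d₀) - R A (FLe 𝕜 f d₀) else 0)
          = R A (FLt 𝕜 (ψ ∘ f) d) - R A (FLe 𝕜 (ψ ∘ f) d) := by
      intro A
      simpa only [neg_sub_neg] using tele f ψ hψ d (fun B => -(R A B))
    have hmultf : ∀ b₀ d₀ : ℝ, multFinR bd deg f p b₀ d₀ =
        (R (FLe 𝕜 f b₀) (FLt 𝕜 f d₀) - R (FLe 𝕜 f b₀) (FLe 𝕜 f d₀))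
          - (R (FLt 𝕜 f b₀) (FLt 𝕜 f d₀) - R (FLt 𝕜 f b₀) (FLe 𝕜 f d₀)) := by
      intro b₀ d₀
      simp only [multFinR, hR]
      ring
    set G : Submodule 𝕜 (E → 𝕜) → ℤ :=
      fun A => R A (FLt 𝕜 (ψ ∘ f) d) - R A (FLe 𝕜 (ψ ∘ f) d) with hG
    have hinner2 : ∀ b₀ : ℝ,
        ∑ d₀ ∈ Finset.univ.image f,
            (if ψ d₀ = d then multFinR bd deg f p b₀ d₀ else 0)
          = G (FLe 𝕜 f b₀) - G (FLt 𝕜 f b₀) := by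
      intro b₀
      have e1 : ∑ d₀ ∈ Finset.univ.image f,
            (if ψ d₀ = d then multFinR bd deg f p b₀ d₀ else 0)
          = (∑ d₀ ∈ Finset.univ.image f,
              (if ψ d₀ = d then R (FLe 𝕜 f b₀) (FLt 𝕜 f d₀) - R (FLe 𝕜 f b₀) (FLe 𝕜 f d₀) else 0))
            - (∑ d₀ ∈ Finset.univ.image f,
              (if ψ d₀ = d then R (FLt 𝕜 f b₀) (FLt 𝕜 f d₀) - R (FLt 𝕜 f b₀) (FLe 𝕜 f d₀) else 0)) := by
        rw [← Finset.sum_sub_distrib]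
        refine Finset.sum_congr rfl fun d₀ _ => ?_
        by_cases h2 : ψ d₀ = d
        · simp only [h2, if_true, hmultf]
        · simp [h2]
      rw [e1, hinner (FLe 𝕜 f b₀), hinner (FLt 𝕜 f b₀)]
    calc multFinR bd deg (ψ ∘ f) p b d
        = G (FLe 𝕜 (ψ ∘ f) b) - G (FLt 𝕜 (ψ ∘ f) b) := by
          simp only [multFinR, hG, hR]; ring
      _ = ∑ b₀ ∈ Finset.univ.image f,
            (if ψ b₀ = b then G (FLe 𝕜 f b₀) - G (FLt 𝕜 f b₀) else 0) :=
          (tele f ψ hψ b G).symm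
      _ = ∑ b₀ ∈ Finset.univ.image f, ∑ d₀ ∈ Finset.univ.image f,
            (if ψ b₀ = b ∧ ψ d₀ = d ∧ b₀ < d₀ then multFinR bd deg f p b₀ d₀ else 0) := by
          refine Finset.sum_congr rfl fun b₀ _ => ?_
          simp only [step1]
          by_cases h1 : ψ b₀ = b
          · simp only [h1, if_true, hinner2 b₀]
          · simp [h1]
  · intro p b
    have := tele f ψ hψ b (fun A => (persRankR bd deg p A ⊤ : ℤ))
    simp only [multInfR]
    rw [← this]
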